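/- Fix n ≥ 1 and set b = ⌊log₂ n⌋ + 2. In ℤ[X₀, …, X_{b−1}], let I′ be the ideal generated by Xᵢ² − (−2·Xᵢ + X_{i+1}) for 0 ≤ i ≤ b−2 together with X_{b−1}². If g is a multilinear polynomial (every exponent in every monomial of its support is at most 1) with (1 + X₀)ⁿ − g ∈ I′, then evaluating g at X₀ = X₁ = ⋯ = X_{b−1} = 1 gives 2^{wt(n)}, the n-th term of Gould's sequence, where wt(n) is the number of ones in the binary expansion of n. -/

import Mathlib

open MvPolynomial

/-- The generators of the ideal `I′`: `Xᵢ² − (−2Xᵢ + X_{i+1})` for `i ≤ b-2`, and `X_{b-1}²`. -/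
noncomputable def gens' (b : ℕ) : Fin b → MvPolynomial (Fin b) ℤ := fun i =>
  if h : (i : ℕ) + 1 < b then X i ^ 2 - (-2 * X i + X ⟨(i : ℕ) + 1, h⟩) else X i ^ 2

namespace Stmt6Aux

/-- binary weight -/
def w (k : ℕ) : ℕ := (Nat.digits 2 k).sum

lemma w_eq (m : ℕ) : w m = m % 2 + w (m / 2) := by
  rcases Nat.eq_zero_or_pos m with h | h
  · subst h; simp [w]
  · unfold w
    rw [Nat.digits_def' (by norm_num : 1 < 2) h]
    simp

lemma w_add_pow (j : ℕ) : ∀ k, Nat.testBit k j = false → w (k + 2 ^ j) = w k + 1 := by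
  induction j with
  | zero =>
    intro k h
    have hk : k % 2 = 0 := by
      rw [Nat.testBit_zero] at h
      simpa using h
    rw [pow_zero, w_eq (k + 1), w_eq k]
    have h2 : (k + 1) / 2 = k / 2 := by omega
    rw [h2]
    omega
  | succ j ih =>
    intro k h
    rw [Nat.testBit_add_one] at h
    have ht : 2 ^ (j + 1) = 2 * 2 ^ j := by ring
    have e1 : (k + 2 ^ (j + 1)) % 2 = k % 2 := by omega
    have e2 : (k + 2 ^ (j + 1)) / 2 = k / 2 + 2 ^ j := by omega
    rw [w_eq (k + 2 ^ (j + 1)), e1, e2, ih _ h, w_eq k]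
    omega

lemma sum_range_two_pow (n : ℕ) : ∑ i ∈ Finset.range n, 2 ^ i = 2 ^ n - 1 := by
  induction n with
  | zero => simp
  | succ n ih =>
    rw [Finset.sum_range_succ, ih]
    have h1 : 1 ≤ 2 ^ n := Nat.one_le_two_pow
    have h2 : 2 ^ (n + 1) = 2 * 2 ^ n := by ring
    omega

lemma w_sum (T : Finset ℕ) : w (∑ i ∈ T, 2 ^ i) = T.card := by
  induction T using Finset.induction_on_max with
  | empty => simp [w]
  | insert a s ha ih =>
    have hns : a ∉ s := fun h => lt_irrefl a (ha a h)
    rw [Finset.sum_insert hns]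
    have hlt : ∑ i ∈ s, 2 ^ i < 2 ^ a := by
      have hle : ∑ i ∈ s, 2 ^ i ≤ ∑ i ∈ Finset.range a, 2 ^ i :=
        Finset.sum_le_sum_of_subset (fun x hx => Finset.mem_range.mpr (ha x hx))
      have h1 : 1 ≤ 2 ^ a := Nat.one_le_two_pow
      rw [sum_range_two_pow] at hle
      omega
    have hb : Nat.testBit (∑ i ∈ s, 2 ^ i) a = false := Nat.testBit_lt_two_pow hlt
    rw [add_comm, w_add_pow a _ hb, ih, Finset.card_insert_of_notMem hns]

/-- the linear functional `∑ aₖ Xᵏ ↦ ∑ aₖ 2^{w k}`. -/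
noncomputable def L : Polynomial ℤ →+ ℤ where
  toFun q := q.sum fun k a => a * 2 ^ w k
  map_zero' := Polynomial.sum_zero_index _
  map_add' p q :=
    Polynomial.sum_add_index p q (fun k a => a * 2 ^ w k) (fun _ => by ring)
      (fun _ _ _ => by ring)

lemma L_apply (q : Polynomial ℤ) : L q = q.sum fun k a => a * 2 ^ w k := rfl

lemma L_monomial (k : ℕ) (c : ℤ) : L (Polynomial.monomial k c) = c * 2 ^ w k := by
  rw [L_apply, Polynomial.sum_monomial_index c (fun k a => a * 2 ^ w k) (by ring)]

lemma L_C_mul (c : ℤ) (p : Polynomial ℤ) : L (Polynomial.C c * p) = c * L p := by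
  rw [← Polynomial.smul_eq_C_mul, L_apply, L_apply,
    Polynomial.sum_smul_index p c (fun k a => a * 2 ^ w k) (fun i => by ring),
    Polynomial.sum_def, Polynomial.sum_def, Finset.mul_sum]
  exact Finset.sum_congr rfl fun k _ => by ring

lemma L_prod (S : Finset ℕ) : ∀ T : Finset ℕ, Disjoint S T →
    L ((∏ i ∈ S, ((Polynomial.X : Polynomial ℤ) ^ 2 ^ i - 1)) *
      Polynomial.X ^ (∑ i ∈ T, 2 ^ i)) = 2 ^ T.card := by
  induction S using Finset.induction_on with
  | empty =>
    intro T _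
    rw [Finset.prod_empty, one_mul, Polynomial.X_pow_eq_monomial, L_monomial, w_sum, one_mul]
  | @insert j S' hjS' ih =>
    intro T hdisj
    have hjT : j ∉ T := fun h =>
      (Finset.disjoint_left.mp hdisj (Finset.mem_insert_self j S')) h
    have hd : Disjoint S' T :=
      Finset.disjoint_of_subset_left (Finset.subset_insert j S') hdisj
    have hd2 : Disjoint S' (insert j T) := by
      rw [Finset.disjoint_insert_right]
      exact ⟨hjS', hd⟩
    rw [Finset.prod_insert hjS']
    have expand : ((Polynomial.X : Polynomial ℤ) ^ 2 ^ j - 1) *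
        (∏ i ∈ S', ((Polynomial.X : Polynomial ℤ) ^ 2 ^ i - 1)) *
        Polynomial.X ^ (∑ i ∈ T, 2 ^ i)
        = (∏ i ∈ S', ((Polynomial.X : Polynomial ℤ) ^ 2 ^ i - 1)) *
            Polynomial.X ^ (∑ i ∈ insert j T, 2 ^ i)
          - (∏ i ∈ S', ((Polynomial.X : Polynomial ℤ) ^ 2 ^ i - 1)) *
            Polynomial.X ^ (∑ i ∈ T, 2 ^ i) := by
      rw [Finset.sum_insert hjT, pow_add]
      ring
    rw [expand, map_sub, ih _ hd2, ih _ hd, Finset.card_insert_of_notMem hjT]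
    ring

end Stmt6Aux

open Stmt6Aux in
theorem stmt6 (n : ℕ) (hn : 1 ≤ n) (b : ℕ) (hb : b = Nat.log 2 n + 2)
    (g : MvPolynomial (Fin b) ℤ)
    (hml : ∀ m ∈ g.support, ∀ i : Fin b, m i ≤ 1)
    (hg : (1 + X (⟨0, by omega⟩ : Fin b)) ^ n - g ∈ Ideal.span (Set.range (gens' b))) :
    eval (fun _ : Fin b => (1 : ℤ)) g = 2 ^ (Nat.digits 2 n).sum := by
  have hb2 : 2 ≤ b := by omega
  have hnb : n < 2 ^ b := by
    have h1 : n < 2 ^ (Nat.log 2 n + 1) := Nat.lt_pow_succ_log_self (by norm_num) n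
    have h2 : (2:ℕ) ^ (Nat.log 2 n + 1) ≤ 2 ^ b :=
      Nat.pow_le_pow_right (by norm_num) (by omega)
    omega
  set φ : MvPolynomial (Fin b) ℤ →ₐ[ℤ] Polynomial ℤ :=
    aeval (fun i : Fin b => (Polynomial.X : Polynomial ℤ) ^ 2 ^ (i : ℕ) - 1) with hφ
  set f : Polynomial ℤ := ((Polynomial.X : Polynomial ℤ) ^ 2 ^ (b - 1) - 1) ^ 2 with hf
  -- the generators map into (f)
  have hmem : ∀ i : Fin b, φ (gens' b i) ∈ Ideal.span {f} := by
    intro i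
    unfold gens'
    split_ifs with h
    · have hz : φ (X i ^ 2 - (-2 * X i + X (⟨(i : ℕ) + 1, h⟩ : Fin b))) = 0 := by
        have h2 : (Polynomial.X : Polynomial ℤ) ^ 2 ^ ((i : ℕ) + 1)
            = ((Polynomial.X : Polynomial ℤ) ^ 2 ^ (i : ℕ)) ^ 2 := by
          rw [← pow_mul, pow_succ]
        simp only [hφ, map_sub, map_add, map_mul, map_pow, map_neg, map_ofNat, aeval_X]
        rw [h2]
        ring
      rw [hz]
      exact Ideal.zero_mem _
    · have hi : (i : ℕ) = b - 1 := by
        have := i.isLt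
        omega
      have hz : φ (X i ^ 2) = f := by
        rw [map_pow, hφ]
        rw [aeval_X, hi]
      rw [hz]
      exact Ideal.subset_span rfl
  -- so `X^n - φ g` is divisible by f
  have hdvd : f ∣ ((Polynomial.X : Polynomial ℤ) ^ n - φ g) := by
    have hspan : Ideal.span (Set.range (gens' b)) ≤
        Ideal.comap (φ : MvPolynomial (Fin b) ℤ →+* Polynomial ℤ) (Ideal.span {f}) := by
      rw [Ideal.span_le]
      rintro _ ⟨i, rfl⟩
      exact hmem i
    have h1 := hspan hg
    rw [Ideal.mem_comap] at h1
    have h2 : φ ((1 + X (⟨0, by omega⟩ : Fin b)) ^ n - g)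
        = (Polynomial.X : Polynomial ℤ) ^ n - φ g := by
      rw [map_sub, map_pow, map_add, map_one, hφ, aeval_X]
      norm_num
    rw [show ((φ : MvPolynomial (Fin b) ℤ →+* Polynomial ℤ)
        ((1 + X (⟨0, by omega⟩ : Fin b)) ^ n - g)) =
        φ ((1 + X (⟨0, by omega⟩ : Fin b)) ^ n - g) from rfl, h2] at h1
    exact Ideal.mem_span_singleton.mp h1
  -- canonical form of φ applied to a multilinear monomial
  have key : ∀ m ∈ g.support, φ (monomial m (coeff m g)) =
      Polynomial.C (coeff m g) *
        ∏ k ∈ m.support.image Fin.val, ((Polynomial.X : Polynomial ℤ) ^ 2 ^ k - 1) := by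
    intro m hm
    rw [hφ, aeval_monomial]
    have hc : (algebraMap ℤ (Polynomial ℤ)) (coeff m g) = Polynomial.C (coeff m g) := by
      simp [algebraMap_int_eq]
    rw [hc]
    congr 1
    have himg : ∏ k ∈ m.support.image Fin.val, ((Polynomial.X : Polynomial ℤ) ^ 2 ^ k - 1)
        = ∏ i ∈ m.support, ((Polynomial.X : Polynomial ℤ) ^ 2 ^ (i : ℕ) - 1) :=
      Finset.prod_image (fun a _ c _ h => Fin.val_injective h)
    rw [Finsupp.prod, himg]
    apply Finset.prod_congr rfl
    intro i hi
    have h1 : m i = 1 :=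
      le_antisymm (hml m hm i) (Nat.one_le_iff_ne_zero.mpr (Finsupp.mem_support_iff.mp hi))
    rw [h1, pow_one]
  -- degree bound
  have hdegφg : (φ g).natDegree ≤ 2 ^ b - 1 := by
    conv_lhs => rw [← support_sum_monomial_coeff g, map_sum]
    apply Polynomial.natDegree_sum_le_of_forall_le
    intro m hm
    rw [key m hm]
    refine le_trans Polynomial.natDegree_mul_le ?_
    rw [Polynomial.natDegree_C, zero_add]
    refine le_trans (Polynomial.natDegree_prod_le _ _) ?_
    have hstep : ∑ k ∈ m.support.image Fin.val,
        ((Polynomial.X : Polynomial ℤ) ^ 2 ^ k - 1).natDegree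
        ≤ ∑ k ∈ m.support.image Fin.val, 2 ^ k := by
      apply Finset.sum_le_sum
      intro k _
      rw [show (1 : Polynomial ℤ) = Polynomial.C 1 by simp]
      exact le_of_eq Polynomial.natDegree_X_pow_sub_C
    refine le_trans hstep ?_
    have hsub : m.support.image Fin.val ⊆ Finset.range b := by
      intro k hk
      obtain ⟨i, _, rfl⟩ := Finset.mem_image.mp hk
      exact Finset.mem_range.mpr i.isLt
    calc ∑ k ∈ m.support.image Fin.val, 2 ^ k
        ≤ ∑ k ∈ Finset.range b, 2 ^ k := Finset.sum_le_sum_of_subset hsub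
      _ = 2 ^ b - 1 := sum_range_two_pow b
  -- f is monic of degree 2^b
  have hfmonic : f.Monic := by
    rw [hf, show ((Polynomial.X : Polynomial ℤ) ^ 2 ^ (b - 1) - 1)
      = Polynomial.X ^ 2 ^ (b - 1) - Polynomial.C 1 by simp]
    exact (Polynomial.monic_X_pow_sub_C 1 (Nat.two_pow_pos (b - 1)).ne').pow 2
  have hfd : f.natDegree = 2 ^ b := by
    rw [hf, Polynomial.natDegree_pow,
      show ((Polynomial.X : Polynomial ℤ) ^ 2 ^ (b - 1) - 1)
        = Polynomial.X ^ 2 ^ (b - 1) - Polynomial.C 1 by simp,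
      Polynomial.natDegree_X_pow_sub_C]
    have e : (2 : ℕ) ^ b = 2 * 2 ^ (b - 1) := by
      rw [← pow_succ']
      congr 1
      omega
    omega
  -- conclude φ g = X ^ n
  have hfe : φ g = (Polynomial.X : Polynomial ℤ) ^ n := by
    obtain ⟨q, hq⟩ := hdvd
    have hdeg : ((Polynomial.X : Polynomial ℤ) ^ n - φ g).natDegree < 2 ^ b := by
      refine lt_of_le_of_lt (Polynomial.natDegree_sub_le _ _) ?_
      rw [Polynomial.natDegree_X_pow]
      have h1 : 1 ≤ 2 ^ b := Nat.one_le_two_pow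
      exact max_lt hnb (by omega)
    rcases eq_or_ne q 0 with h0 | h0
    · rw [h0, mul_zero] at hq
      exact (sub_eq_zero.mp hq).symm
    · exfalso
      rw [hq, Polynomial.natDegree_mul hfmonic.ne_zero h0, hfd] at hdeg
      omega
  -- compute L (φ g) as the sum of coefficients of g
  have hL : L (φ g) = ∑ m ∈ g.support, coeff m g := by
    conv_lhs => rw [← support_sum_monomial_coeff g, map_sum, map_sum]
    apply Finset.sum_congr rfl
    intro m hm
    rw [key m hm, L_C_mul]
    have h1 := L_prod (m.support.image Fin.val) ∅ (Finset.disjoint_empty_right _)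
    simp only [Finset.sum_empty, pow_zero, mul_one, Finset.card_empty] at h1
    rw [h1, mul_one]
  -- compute L (φ g) directly
  have hLX : L (φ g) = 2 ^ (Nat.digits 2 n).sum := by
    rw [hfe, Polynomial.X_pow_eq_monomial, L_monomial, one_mul]
    rfl
  -- evaluation at 1 is the sum of coefficients
  have hev : eval (fun _ : Fin b => (1 : ℤ)) g = ∑ m ∈ g.support, coeff m g := by
    rw [eval_eq]
    apply Finset.sum_congr rfl
    intro m _
    simp
  rw [hev, ← hL, hLX]
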